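/- Let G be the group presented with two generators p, γ and the relations p⁹ = 1 and γ⁻¹pγ = p⁴. Then the commutator subgroup [G,G] is contained in the center of G and has order 3. -/

import Mathlib

namespace ClassicalZariski.Stmt6

/-- `p` in the free group on the two generators `p, γ`. -/
def p : FreeGroup (Fin 2) := FreeGroup.of 0

/-- `γ` in the free group on the two generators. -/
def g : FreeGroup (Fin 2) := FreeGroup.of 1

/-- The relations `p⁹ = 1` and `γ⁻¹ p γ = p⁴`. -/
def rels : Set (FreeGroup (Fin 2)) :=
  { p ^ 9, (g⁻¹ * p * g) * (p ^ 4)⁻¹ }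

/-- The group `G` presented by generators `p, γ` and relations `p⁹ = 1`, `γ⁻¹ p γ = p⁴`. -/
def G : Type := PresentedGroup rels

instance : Group G := by unfold G; infer_instance

open scoped commutatorElement

/-- The image of `p` in `G`. -/
def P : G := (PresentedGroup.of 0 : PresentedGroup rels)

/-- The image of `γ` in `G`. -/
def Γ : G := (PresentedGroup.of 1 : PresentedGroup rels)

/-- `G` is generated by `P` and `Γ`. -/
lemma generated_byG (H : Subgroup G) (h0 : P ∈ H) (h1 : Γ ∈ H) : ∀ x : G, x ∈ H := by
  intro x
  refine PresentedGroup.generated_by rels H ?_ x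
  intro j
  fin_cases j
  · exact h0
  · exact h1

/-- conjugation commutes with powers, in the convenient form. -/
lemma conj_pow' (a b : G) (n : ℕ) : (a⁻¹ * b * a) ^ n = a⁻¹ * b ^ n * a := by
  have h := conj_pow (i := n) (a := a⁻¹) (b := b)
  rwa [inv_inv] at h

lemma rel_of_mem {r : FreeGroup (Fin 2)} (hr : r ∈ rels) :
    (PresentedGroup.mk rels r : G) = 1 :=
  (QuotientGroup.eq_one_iff r).2 (Subgroup.subset_normalClosure hr)

lemma hP9 : P ^ 9 = 1 := by
  have := rel_of_mem (Set.mem_insert (p ^ 9) _)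
  rwa [map_pow] at this

lemma hconj : Γ⁻¹ * P * Γ = P ^ 4 := by
  have := rel_of_mem (show (g⁻¹ * p * g) * (p ^ 4)⁻¹ ∈ rels from
    Set.mem_insert_of_mem _ rfl)
  rw [map_mul, map_mul, map_mul, map_inv, map_inv, map_pow] at this
  have h := mul_eq_one_iff_eq_inv.mp this
  rw [inv_inv] at h
  exact h

lemma hconj' : Γ * P * Γ⁻¹ = P ^ 7 := by
  have h7 : Γ⁻¹ * P ^ 7 * Γ = P := by
    rw [← conj_pow', hconj, ← pow_mul]
    calc P ^ (4 * 7) = (P ^ 9) ^ 3 * P := by rw [← pow_mul, ← pow_succ]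
    _ = P := by rw [hP9, one_pow, one_mul]
  calc Γ * P * Γ⁻¹ = Γ * (Γ⁻¹ * P ^ 7 * Γ) * Γ⁻¹ := by rw [h7]
  _ = P ^ 7 := by group

lemma hconj3 : Γ⁻¹ * P ^ 3 * Γ = P ^ 3 := by
  rw [← conj_pow', hconj, ← pow_mul]
  calc P ^ (4 * 3) = P ^ 9 * P ^ 3 := by rw [← pow_add]
  _ = P ^ 3 := by rw [hP9, one_mul]

lemma P3_central : P ^ 3 ∈ Subgroup.center G := by
  rw [Subgroup.mem_center_iff]
  intro x
  refine generated_byG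
    { carrier := {x | x * P ^ 3 = P ^ 3 * x}
      one_mem' := by simp
      mul_mem' := by
        intro a b ha hb
        simp only [Set.mem_setOf_eq] at *
        rw [mul_assoc, hb, ← mul_assoc, ha, mul_assoc]
      inv_mem' := by
        intro a ha
        simp only [Set.mem_setOf_eq] at *
        calc a⁻¹ * P ^ 3 = a⁻¹ * (P ^ 3 * a) * a⁻¹ := by group
        _ = a⁻¹ * (a * P ^ 3) * a⁻¹ := by rw [ha]
        _ = P ^ 3 * a⁻¹ := by group } ?_ ?_ x
  · show P * P ^ 3 = P ^ 3 * P
    rw [← pow_succ, ← pow_succ']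
  · show Γ * P ^ 3 = P ^ 3 * Γ
    have h2 : Γ * P ^ 3 * Γ⁻¹ = P ^ 3 := by
      calc Γ * P ^ 3 * Γ⁻¹ = Γ * (Γ⁻¹ * P ^ 3 * Γ) * Γ⁻¹ := by rw [hconj3]
      _ = P ^ 3 := by group
    calc Γ * P ^ 3 = Γ * P ^ 3 * Γ⁻¹ * Γ := by group
    _ = P ^ 3 * Γ := by rw [h2]

/-- The subgroup generated by `P ^ 3`. -/
def N : Subgroup G := Subgroup.zpowers (P ^ 3)

lemma N_central {n : G} (hn : n ∈ N) : ∀ x : G, n * x = x * n := by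
  obtain ⟨k, rfl⟩ := hn
  intro x
  exact (Subgroup.mem_center_iff.mp
    (Subgroup.zpow_mem (Subgroup.center G) P3_central k) x).symm

lemma commPΓ_mem : ⁅P, Γ⁆ ∈ N := by
  have hPG : ⁅P, Γ⁆ = (P ^ 3)⁻¹ * (P ^ 3)⁻¹ := by
    have h : ⁅P, Γ⁆ = P * (Γ * P * Γ⁻¹)⁻¹ := by
      simp only [commutatorElement_def]; group
    rw [h, hconj']
    have h6 : P * (P ^ 7)⁻¹ = (P ^ 6)⁻¹ := by group
    rw [h6, show (6 : ℕ) = 3 + 3 from rfl, pow_add, mul_inv_rev]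
  rw [hPG]
  exact mul_mem (inv_mem (Subgroup.mem_zpowers _)) (inv_mem (Subgroup.mem_zpowers _))

lemma comm_mem : ∀ a b : G, ⁅a, b⁆ ∈ N := by
  have key_right : ∀ a : G, ⁅a, P⁆ ∈ N → ⁅a, Γ⁆ ∈ N → ∀ b : G, ⁅a, b⁆ ∈ N := by
    intro a haP haΓ b
    refine generated_byG
      { carrier := {b | ⁅a, b⁆ ∈ N}
        one_mem' := by
          simp only [Set.mem_setOf_eq, commutatorElement_one_right]
          exact one_mem N
        mul_mem' := by
          intro b c hb hc
          simp only [Set.mem_setOf_eq] at *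
          have e1 : ⁅a, b * c⁆ = ⁅a, b⁆ * (b * ⁅a, c⁆ * b⁻¹) := by
            simp only [commutatorElement_def]; group
          have e2 : b * ⁅a, c⁆ * b⁻¹ = ⁅a, c⁆ := by
            rw [← N_central hc b]; group
          rw [e1, e2]
          exact mul_mem hb hc
        inv_mem' := by
          intro b hb
          simp only [Set.mem_setOf_eq] at *
          have e1 : ⁅a, b⁻¹⁆ = b⁻¹ * ⁅a, b⁆⁻¹ * b := by
            simp only [commutatorElement_def]; group
          have e2 : b⁻¹ * ⁅a, b⁆⁻¹ * b = ⁅a, b⁆⁻¹ := by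
            rw [mul_assoc, N_central (inv_mem hb) b, ← mul_assoc,
              inv_mul_cancel, one_mul]
          rw [e1, e2]
          exact inv_mem hb } haP haΓ b
  intro a
  refine generated_byG
    { carrier := {a | ∀ b, ⁅a, b⁆ ∈ N}
      one_mem' := by
        intro b
        simp only [commutatorElement_one_left]
        exact one_mem N
      mul_mem' := by
        intro a c ha hc b
        have e1 : ⁅a * c, b⁆ = a * ⁅c, b⁆ * a⁻¹ * ⁅a, b⁆ := by
          simp only [commutatorElement_def]; group
        have e2 : a * ⁅c, b⁆ * a⁻¹ = ⁅c, b⁆ := by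
          rw [← N_central (hc b) a]; group
        rw [e1, e2]
        exact mul_mem (hc b) (ha b)
      inv_mem' := by
        intro a ha b
        have e1 : ⁅a⁻¹, b⁆ = a⁻¹ * ⁅a, b⁆⁻¹ * a := by
          simp only [commutatorElement_def]; group
        have e2 : a⁻¹ * ⁅a, b⁆⁻¹ * a = ⁅a, b⁆⁻¹ := by
          rw [mul_assoc, N_central (inv_mem (ha b)) a, ← mul_assoc,
            inv_mul_cancel, one_mul]
        rw [e1, e2]
        exact inv_mem (ha b) } ?_ ?_ a
  · refine key_right P (by simp only [commutatorElement_self]; exact one_mem N) commPΓ_mem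
  · refine key_right Γ ?_ (by simp only [commutatorElement_self]; exact one_mem N)
    rw [← commutatorElement_inv]
    exact inv_mem commPΓ_mem

/-- A concrete permutation representation: `p ↦ (x ↦ x + 1)` on `ZMod 9`. -/
def pp : Equiv.Perm (ZMod 9) := ⟨fun x => x + 1, fun x => x + 8, by decide, by decide⟩

/-- `γ ↦ (x ↦ 7 * x)` on `ZMod 9`. -/
def gg : Equiv.Perm (ZMod 9) := ⟨fun x => 7 * x, fun x => 4 * x, by decide, by decide⟩

lemma hrels : ∀ r ∈ rels, FreeGroup.lift ![pp, gg] r = 1 := by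
  intro r hr
  rcases hr with rfl | hr
  · rw [map_pow]
    show (FreeGroup.lift ![pp, gg]) (FreeGroup.of 0) ^ 9 = 1
    rw [FreeGroup.lift_apply_of]
    decide
  · rw [Set.mem_singleton_iff] at hr
    subst hr
    rw [map_mul, map_mul, map_mul, map_inv, map_inv, map_pow]
    show ((FreeGroup.lift ![pp, gg]) (FreeGroup.of 1))⁻¹ *
        (FreeGroup.lift ![pp, gg]) (FreeGroup.of 0) *
        (FreeGroup.lift ![pp, gg]) (FreeGroup.of 1) *
        ((FreeGroup.lift ![pp, gg]) (FreeGroup.of 0) ^ 4)⁻¹ = 1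
    rw [FreeGroup.lift_apply_of, FreeGroup.lift_apply_of]
    decide

/-- The representation `G →* Perm (ZMod 9)`. -/
def φ : PresentedGroup rels →* Equiv.Perm (ZMod 9) := PresentedGroup.toGroup hrels

lemma P3_ne_one : P ^ 3 ≠ 1 := by
  intro h
  have h2 : φ ((P : PresentedGroup rels) ^ 3) = 1 := by
    change φ ((P ^ 3 : G) : PresentedGroup rels) = 1
    rw [h]
    exact map_one φ
  erw [map_pow] at h2
  have h3 : φ (P : PresentedGroup rels) = pp := PresentedGroup.toGroup.of hrels
  rw [h3] at h2
  exact absurd h2 (by decide)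

lemma P3_mem_commutator : P ^ 3 ∈ commutator G := by
  have h : ⁅Γ⁻¹, P⁆ = P ^ 3 := by
    have e : ⁅Γ⁻¹, P⁆ = (Γ⁻¹ * P * Γ) * P⁻¹ := by
      simp only [commutatorElement_def]; group
    rw [e, hconj, show (4 : ℕ) = 3 + 1 from rfl, pow_succ]
    group
  rw [← h]
  exact Subgroup.commutator_mem_commutator (Subgroup.mem_top _) (Subgroup.mem_top _)

lemma commutator_eq_N : commutator G = N := by
  apply le_antisymm
  · rw [commutator_def, Subgroup.commutator_le]
    intro g1 _ g2 _
    exact comm_mem g1 g2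
  · exact Subgroup.zpowers_le.2 P3_mem_commutator

theorem commutator_central_of_order_three :
    commutator G ≤ Subgroup.center G ∧ Nat.card (commutator G) = 3 := by
  constructor
  · rw [commutator_eq_N]
    exact Subgroup.zpowers_le.2 P3_central
  · rw [commutator_eq_N]
    have hcard : Nat.card N = orderOf (P ^ 3) := Nat.card_zpowers _
    rw [hcard]
    haveI : Fact (Nat.Prime 3) := ⟨by norm_num⟩
    refine orderOf_eq_prime ?_ P3_ne_one
    rw [← pow_mul]
    exact hP9

end ClassicalZariski.Stmt6
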